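/- (The minimal tensor product contains no entangled pure states.) Let A ⊆ V and B ⊆ W be nonempty compact convex subsets of finite-dimensional real vector spaces, equipped with linear functionals u_A : V → ℝ and u_B : W → ℝ satisfying u_A(a) = 1 for all a ∈ A and u_B(b) = 1 for all b ∈ B. Then the set of extreme points of the minimal tensor product A ⊠ B is exactly {a ⊗ b : a is an extreme point of A and b is an extreme point of B}; in particular every pure (extreme) state of A ⊠ B is a product of pure states. -/

import Mathlib

open scoped TensorProduct

noncomputable section

/-- The minimal tensor product of two state spaces: the convex hull of products of states. -/
def minTensor {V W : Type*} [AddCommGroup V] [Module ℝ V] [AddCommGroup W] [Module ℝ W]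
    (A : Set V) (B : Set W) : Set (V ⊗[ℝ] W) :=
  convexHull ℝ {x : V ⊗[ℝ] W | ∃ a ∈ A, ∃ b ∈ B, x = a ⊗ₜ[ℝ] b}

/-- An extreme point cannot be written as a nontrivial convex combination: all points in
any convex combination representing it must be equal to it. -/
lemma extremePoint_eq_of_sum {E : Type*} [AddCommGroup E] [Module ℝ E] {A : Set E}
    (hAv : Convex ℝ A) {x : E} (hx : x ∈ A.extremePoints ℝ) {ι : Type*} (t : Finset ι)
    (w : ι → ℝ) (z : ι → E) (hw : ∀ i ∈ t, 0 < w i) (hw1 : ∑ i ∈ t, w i = 1)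
    (hz : ∀ i ∈ t, z i ∈ A) (hsum : ∑ i ∈ t, w i • z i = x) : ∀ i ∈ t, z i = x := by
  classical
  induction t using Finset.induction_on generalizing w with
  | empty => simp at hw1
  | @insert j t hj IH =>
    rw [Finset.sum_insert hj] at hw1 hsum
    have hwj : 0 < w j := hw j (Finset.mem_insert_self j t)
    by_cases ht : t = ∅
    · subst ht
      simp only [Finset.sum_empty, add_zero] at hw1 hsum
      intro i hi
      rcases Finset.mem_insert.1 hi with rfl | hi'
      · rw [hw1, one_smul] at hsum; exact hsum
      · simp at hi'
    · have htne : t.Nonempty := Finset.nonempty_iff_ne_empty.2 ht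
      set s := ∑ i ∈ t, w i with hs
      have hspos : 0 < s := Finset.sum_pos (fun i hi => hw i (Finset.mem_insert_of_mem hi)) htne
      set c := ∑ i ∈ t, (w i / s) • z i with hc
      have hcA : c ∈ A := hAv.sum_mem
        (fun i hi => (div_pos (hw i (Finset.mem_insert_of_mem hi)) hspos).le)
        (by rw [← Finset.sum_div, div_self hspos.ne'])
        (fun i hi => hz i (Finset.mem_insert_of_mem hi))
      have hsc : s • c = ∑ i ∈ t, w i • z i := by
        rw [hc, Finset.smul_sum]
        refine Finset.sum_congr rfl fun i hi => ?_
        rw [smul_smul, mul_comm, div_mul_cancel₀ _ hspos.ne']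
      have hseg : x ∈ openSegment ℝ (z j) c :=
        ⟨w j, s, hwj, hspos, hw1, by rw [hsc]; exact hsum⟩
      have hkey := hx.2 (hz j (Finset.mem_insert_self j t)) hcA hseg
      intro i hi
      rcases Finset.mem_insert.1 hi with rfl | hi'
      · exact hkey
      · exact IH (fun i => w i / s)
          (fun i hi => div_pos (hw i (Finset.mem_insert_of_mem hi)) hspos)
          (by rw [← Finset.sum_div, div_self hspos.ne'])
          (fun i hi => hz i (Finset.mem_insert_of_mem hi))
          (by rw [← hc]; exact hx.2 hcA (hz j (Finset.mem_insert_self j t)) (by rw [openSegment_symm]; exact hseg)) i hi'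

/-- Every element of the minimal tensor product is a convex combination with strictly positive
weights of simple tensors of states. -/
lemma minTensor_rep {V W : Type*} [AddCommGroup V] [Module ℝ V] [AddCommGroup W] [Module ℝ W]
    {A : Set V} {B : Set W} {z : V ⊗[ℝ] W} (hz : z ∈ minTensor A B) :
    ∃ (ι : Type) (t : Finset ι) (w : ι → ℝ) (f : ι → V) (g : ι → W),
      (∀ i ∈ t, 0 < w i) ∧ ∑ i ∈ t, w i = 1 ∧ (∀ i ∈ t, f i ∈ A) ∧ (∀ i ∈ t, g i ∈ B) ∧
      z = ∑ i ∈ t, w i • (f i ⊗ₜ[ℝ] g i) := by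
  classical
  rw [minTensor, convexHull_eq] at hz
  obtain ⟨ι, t, w, p, hw0, hw1, hp, hcm⟩ := hz
  set t' := t.filter (fun i => 0 < w i) with ht'
  have hsub : t' ⊆ t := Finset.filter_subset _ _
  have hw1' : ∑ i ∈ t', w i = 1 := by
    rw [ht', Finset.sum_filter_of_ne, hw1]
    intro i hi hne
    exact (hw0 i hi).lt_of_ne' hne
  have hcm' : ∑ i ∈ t', w i • p i = z := by
    rw [← hcm, Finset.centerMass_eq_of_sum_1 _ _ hw1, ht', Finset.sum_filter_of_ne]
    intro i hi hne
    refine (hw0 i hi).lt_of_ne' fun h0 => hne (by rw [h0, zero_smul])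
  refine ⟨ι, t', w,
    fun i => if h : ∃ a ∈ A, ∃ b ∈ B, p i = a ⊗ₜ[ℝ] b then h.choose else 0,
    fun i => if h : ∃ a ∈ A, ∃ b ∈ B, p i = a ⊗ₜ[ℝ] b then h.choose_spec.2.choose else 0,
    fun i hi => hw0 i (hsub hi) |>.lt_of_ne' ?_, hw1', ?_, ?_, ?_⟩
  · have := Finset.mem_filter.1 hi
    exact this.2.ne'
  · intro i hi
    have h : ∃ a ∈ A, ∃ b ∈ B, p i = a ⊗ₜ[ℝ] b := hp i (hsub hi)
    simp only [dif_pos h]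
    exact h.choose_spec.1
  · intro i hi
    have h : ∃ a ∈ A, ∃ b ∈ B, p i = a ⊗ₜ[ℝ] b := hp i (hsub hi)
    simp only [dif_pos h]
    exact h.choose_spec.2.choose_spec.1
  · rw [← hcm']
    refine Finset.sum_congr rfl fun i hi => ?_
    have h : ∃ a ∈ A, ∃ b ∈ B, p i = a ⊗ₜ[ℝ] b := hp i (hsub hi)
    simp only [dif_pos h]
    rw [← h.choose_spec.2.choose_spec.2]

/-- The left marginal map `V ⊗ W → V` induced by a unit effect on `W`. -/
def margL {V W : Type*} [AddCommGroup V] [Module ℝ V] [AddCommGroup W] [Module ℝ W]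
    (uB : W →ₗ[ℝ] ℝ) : V ⊗[ℝ] W →ₗ[ℝ] V :=
  (TensorProduct.rid ℝ V).toLinearMap ∘ₗ TensorProduct.map LinearMap.id uB

/-- The right marginal map `V ⊗ W → W` induced by a unit effect on `V`. -/
def margR {V W : Type*} [AddCommGroup V] [Module ℝ V] [AddCommGroup W] [Module ℝ W]
    (uA : V →ₗ[ℝ] ℝ) : V ⊗[ℝ] W →ₗ[ℝ] W :=
  (TensorProduct.lid ℝ W).toLinearMap ∘ₗ TensorProduct.map uA LinearMap.id

@[simp] lemma margL_tmul {V W : Type*} [AddCommGroup V] [Module ℝ V] [AddCommGroup W]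
    [Module ℝ W] (uB : W →ₗ[ℝ] ℝ) (v : V) (w : W) :
    margL uB (v ⊗ₜ[ℝ] w) = uB w • v := by
  simp [margL]

@[simp] lemma margR_tmul {V W : Type*} [AddCommGroup V] [Module ℝ V] [AddCommGroup W]
    [Module ℝ W] (uA : V →ₗ[ℝ] ℝ) (v : V) (w : W) :
    margR uA (v ⊗ₜ[ℝ] w) = uA v • w := by
  simp [margR]

/-- The left marginal of an element of the minimal tensor product is a state of `A`. -/
lemma margL_mem {V W : Type*} [AddCommGroup V] [Module ℝ V] [AddCommGroup W] [Module ℝ W]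
    {A : Set V} {B : Set W} (hAv : Convex ℝ A) (uB : W →ₗ[ℝ] ℝ) (huB : ∀ b ∈ B, uB b = 1)
    {z : V ⊗[ℝ] W} (hz : z ∈ minTensor A B) : margL uB z ∈ A := by
  obtain ⟨ι, t, w, f, g, hw, hw1, hf, hg, rfl⟩ := minTensor_rep hz
  rw [map_sum]
  have : ∀ i ∈ t, margL uB (w i • (f i ⊗ₜ[ℝ] g i)) = w i • f i := by
    intro i hi
    rw [map_smul, margL_tmul, huB _ (hg i hi), one_smul]
  rw [Finset.sum_congr rfl this]
  exact hAv.sum_mem (fun i hi => (hw i hi).le) hw1 hf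

/-- The right marginal of an element of the minimal tensor product is a state of `B`. -/
lemma margR_mem {V W : Type*} [AddCommGroup V] [Module ℝ V] [AddCommGroup W] [Module ℝ W]
    {A : Set V} {B : Set W} (hBv : Convex ℝ B) (uA : V →ₗ[ℝ] ℝ) (huA : ∀ a ∈ A, uA a = 1)
    {z : V ⊗[ℝ] W} (hz : z ∈ minTensor A B) : margR uA z ∈ B := by
  obtain ⟨ι, t, w, f, g, hw, hw1, hf, hg, rfl⟩ := minTensor_rep hz
  rw [map_sum]
  have : ∀ i ∈ t, margR uA (w i • (f i ⊗ₜ[ℝ] g i)) = w i • g i := by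
    intro i hi
    rw [map_smul, margR_tmul, huA _ (hf i hi), one_smul]
  rw [Finset.sum_congr rfl this]
  exact hBv.sum_mem (fun i hi => (hw i hi).le) hw1 hg

/-- If both marginals of an element of the minimal tensor product are extreme points, then the
element is the simple tensor of its marginals. -/
lemma eq_tmul_of_marg {V W : Type*} [AddCommGroup V] [Module ℝ V] [AddCommGroup W] [Module ℝ W]
    {A : Set V} {B : Set W} (hAv : Convex ℝ A) (hBv : Convex ℝ B)
    (uA : V →ₗ[ℝ] ℝ) (huA : ∀ a ∈ A, uA a = 1) (uB : W →ₗ[ℝ] ℝ) (huB : ∀ b ∈ B, uB b = 1)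
    {a : V} {b : W} (haE : a ∈ Set.extremePoints ℝ A) (hbE : b ∈ Set.extremePoints ℝ B)
    {z : V ⊗[ℝ] W} (hz : z ∈ minTensor A B)
    (h1 : margL uB z = a) (h2 : margR uA z = b) : z = a ⊗ₜ[ℝ] b := by
  obtain ⟨ι, t, w, f, g, hw, hw1, hf, hg, rfl⟩ := minTensor_rep hz
  have hL : ∑ i ∈ t, w i • f i = a := by
    rw [← h1, map_sum]
    refine Finset.sum_congr rfl fun i hi => ?_
    rw [map_smul, margL_tmul, huB _ (hg i hi), one_smul]
  have hR : ∑ i ∈ t, w i • g i = b := by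
    rw [← h2, map_sum]
    refine Finset.sum_congr rfl fun i hi => ?_
    rw [map_smul, margR_tmul, huA _ (hf i hi), one_smul]
  have hfa : ∀ i ∈ t, f i = a := extremePoint_eq_of_sum hAv haE t w f hw hw1 hf hL
  have hgb : ∀ i ∈ t, g i = b := extremePoint_eq_of_sum hBv hbE t w g hw hw1 hg hR
  have : ∑ i ∈ t, w i • (f i ⊗ₜ[ℝ] g i) = ∑ i ∈ t, w i • (a ⊗ₜ[ℝ] b) := by
    refine Finset.sum_congr rfl fun i hi => ?_
    rw [hfa i hi, hgb i hi]
  rw [this, ← Finset.sum_smul, hw1, one_smul]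

/-- The minimal tensor product contains no entangled pure states: the extreme points of
`A ⊠ B` are exactly the products of extreme points of `A` and of `B`. -/
theorem minTensor_extremePoints {V W : Type*}
    [NormedAddCommGroup V] [NormedSpace ℝ V] [FiniteDimensional ℝ V]
    [NormedAddCommGroup W] [NormedSpace ℝ W] [FiniteDimensional ℝ W]
    (A : Set V) (hA : A.Nonempty) (hAc : IsCompact A) (hAv : Convex ℝ A)
    (B : Set W) (hB : B.Nonempty) (hBc : IsCompact B) (hBv : Convex ℝ B)
    (uA : V →ₗ[ℝ] ℝ) (huA : ∀ a ∈ A, uA a = 1)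
    (uB : W →ₗ[ℝ] ℝ) (huB : ∀ b ∈ B, uB b = 1) :
    Set.extremePoints ℝ (minTensor A B) =
      {x : V ⊗[ℝ] W | ∃ a ∈ Set.extremePoints ℝ A, ∃ b ∈ Set.extremePoints ℝ B,
        x = a ⊗ₜ[ℝ] b} := by
  ext x
  constructor
  · intro hx
    have hxS : x ∈ {x : V ⊗[ℝ] W | ∃ a ∈ A, ∃ b ∈ B, x = a ⊗ₜ[ℝ] b} :=
      extremePoints_convexHull_subset hx
    obtain ⟨a, ha, b, hb, rfl⟩ := hxS
    have hmem : ∀ a' ∈ A, ∀ b' ∈ B, a' ⊗ₜ[ℝ] b' ∈ minTensor A B := fun a' ha' b' hb' =>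
      subset_convexHull ℝ _ ⟨a', ha', b', hb', rfl⟩
    refine ⟨a, ⟨ha, ?_⟩, b, ⟨hb, ?_⟩, rfl⟩
    · intro a1 h1 a2 h2 hseg
      obtain ⟨p, q, hp, hq, hpq, heq⟩ := hseg
      have hseg' : a ⊗ₜ[ℝ] b ∈ openSegment ℝ (a1 ⊗ₜ[ℝ] b) (a2 ⊗ₜ[ℝ] b) :=
        ⟨p, q, hp, hq, hpq, by
          rw [← heq, TensorProduct.add_tmul, TensorProduct.smul_tmul', TensorProduct.smul_tmul']⟩
      have hkey := hx.2 (hmem a1 h1 b hb) (hmem a2 h2 b hb) hseg'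
      have := congrArg (margL uB) hkey
      simpa [huB b hb] using this
    · intro b1 h1 b2 h2 hseg
      obtain ⟨p, q, hp, hq, hpq, heq⟩ := hseg
      have hseg' : a ⊗ₜ[ℝ] b ∈ openSegment ℝ (a ⊗ₜ[ℝ] b1) (a ⊗ₜ[ℝ] b2) :=
        ⟨p, q, hp, hq, hpq, by
          rw [← heq, TensorProduct.tmul_add, TensorProduct.tmul_smul, TensorProduct.tmul_smul]⟩
      have hkey := hx.2 (hmem a ha b1 h1) (hmem a ha b2 h2) hseg'
      have := congrArg (margR uA) hkey
      simpa [huA a ha] using this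
  · rintro ⟨a, haE, b, hbE, rfl⟩
    have ha : a ∈ A := haE.1
    have hb : b ∈ B := hbE.1
    refine ⟨subset_convexHull ℝ _ ⟨a, ha, b, hb, rfl⟩, ?_⟩
    intro x1 h1 x2 h2 hseg
    obtain ⟨p, q, hp, hq, hpq, heq⟩ := hseg
    have hLa : margL uB (a ⊗ₜ[ℝ] b) = a := by simp [huB b hb]
    have hRb : margR uA (a ⊗ₜ[ℝ] b) = b := by simp [huA a ha]
    have hLseg : a ∈ openSegment ℝ (margL uB x1) (margL uB x2) :=
      ⟨p, q, hp, hq, hpq, by rw [← map_smul, ← map_smul, ← map_add, heq, hLa]⟩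
    have hRseg : b ∈ openSegment ℝ (margR uA x1) (margR uA x2) :=
      ⟨p, q, hp, hq, hpq, by rw [← map_smul, ← map_smul, ← map_add, heq, hRb]⟩
    have hL := haE.2 (margL_mem hAv uB huB h1) (margL_mem hAv uB huB h2) hLseg
    have hR := hbE.2 (margR_mem hBv uA huA h1) (margR_mem hBv uA huA h2) hRseg
    exact eq_tmul_of_marg hAv hBv uA huA uB huB haE hbE h1 hL hR
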